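/- For 0 ≤ θ ≤ π/2, the limit as N → ∞ of trace(B_N(θ)²)/N equals πθ. -/

import Mathlib

open Matrix Finset Real Filter

noncomputable def Ee (θ : ℝ) (m n : ℕ) : ℝ :=
  if m = n then θ else Real.sin (((m : ℝ) - (n : ℝ)) * θ) / ((m : ℝ) - (n : ℝ))

noncomputable def sfun (θ : ℝ) (d : ℕ) : ℝ := (Real.sin ((d : ℝ) * θ) / (d : ℝ)) ^ 2

noncomputable def Sp (θ : ℝ) (k : ℕ) : ℝ := ∑ d ∈ Finset.range k, sfun θ (d + 1)

lemma Ee_symm (θ : ℝ) (m n : ℕ) : Ee θ m n = Ee θ n m := by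
  unfold Ee
  rcases eq_or_ne m n with h | h
  · subst h; simp
  · rw [if_neg h, if_neg (Ne.symm h)]
    have h1 : ((n : ℝ) - m) = -((m : ℝ) - n) := by ring
    rw [h1, neg_mul, Real.sin_neg, neg_div_neg_eq]

lemma Ee_sq (θ : ℝ) {m n : ℕ} (h : n < m) : Ee θ m n * Ee θ n m = sfun θ (m - n) := by
  rw [Ee_symm θ n m, ← sq]
  unfold Ee sfun
  rw [if_neg (by omega)]
  have hc : ((m - n : ℕ) : ℝ) = (m : ℝ) - n := by
    push_cast [Nat.cast_sub h.le]; ring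
  rw [hc]

lemma main_id (θ : ℝ) : ∀ N : ℕ,
    ∑ m ∈ Finset.range N, ∑ n ∈ Finset.range N, Ee θ m n * Ee θ n m
      = N * θ ^ 2 + 2 * ∑ k ∈ Finset.range N, Sp θ k := by
  intro N
  induction N with
  | zero => simp
  | succ N ih =>
    have hrow : ∑ n ∈ Finset.range N, Ee θ N n * Ee θ n N = Sp θ N := by
      rw [Finset.sum_congr rfl (fun n hn => Ee_sq θ (Finset.mem_range.1 hn))]
      unfold Sp
      rw [← Finset.sum_range_reflect (fun j => sfun θ (j + 1)) N]
      refine Finset.sum_congr rfl fun j hj => ?_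
      have hj' := Finset.mem_range.1 hj
      congr 1
      omega
    have hcol : ∑ m ∈ Finset.range N, Ee θ m N * Ee θ N m = Sp θ N := by
      rw [← hrow]
      exact Finset.sum_congr rfl fun m _ => by rw [mul_comm]
    have hdiag : Ee θ N N * Ee θ N N = θ ^ 2 := by
      unfold Ee; rw [if_pos rfl]; ring
    simp only [Finset.sum_range_succ, Finset.sum_add_distrib]
    rw [ih, hrow, hcol, hdiag]
    push_cast
    ring

lemma sfun_hasSum (θ : ℝ) (hθ0 : 0 ≤ θ) (hθ1 : θ ≤ π / 2) :
    HasSum (fun n : ℕ => sfun θ n) ((π * θ - θ ^ 2) / 2) := by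
  have hπ : (0 : ℝ) < π := Real.pi_pos
  have hx : θ / π ∈ Set.Icc (0 : ℝ) 1 := by
    constructor
    · exact div_nonneg hθ0 hπ.le
    · rw [div_le_one hπ]; linarith
  have hcos := hasSum_one_div_nat_pow_mul_cos (k := 1) one_ne_zero hx
  have heval : (Polynomial.map (algebraMap ℚ ℝ) (Polynomial.bernoulli 2)).eval (θ / π)
      = (θ / π) ^ 2 - (θ / π) + 1 / 6 := by
    have hb2 : _root_.bernoulli 2 = 1 / 6 := by
      rw [bernoulli_eq_bernoulli'_of_ne_one (by norm_num), bernoulli'_two]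
    simp [Polynomial.bernoulli, Finset.sum_range_succ, bernoulli_zero, bernoulli_one, hb2]
    ring
  have hcos' : HasSum (fun n : ℕ => 1 / (n : ℝ) ^ 2 * Real.cos (2 * n * θ))
      (θ ^ 2 - π * θ + π ^ 2 / 6) := by
    have harg : ∀ n : ℕ, 2 * π * n * (θ / π) = 2 * n * θ := by
      intro n; field_simp
    have hconst : (-1 : ℝ) ^ (1 + 1) * (2 * π) ^ (2 * 1) / 2 / (Nat.factorial (2 * 1)) *
        (Polynomial.map (algebraMap ℚ ℝ) (Polynomial.bernoulli (2 * 1))).eval (θ / π)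
        = θ ^ 2 - π * θ + π ^ 2 / 6 := by
      norm_num [heval]
      field_simp
    rw [← hconst]
    convert hcos using 2 with n
    rw [harg]
  have hzeta := hasSum_zeta_two
  have h := (hzeta.sub hcos').div_const 2
  have hfe : ∀ n : ℕ, sfun θ n
      = (1 / (n : ℝ) ^ 2 - 1 / (n : ℝ) ^ 2 * Real.cos (2 * n * θ)) / 2 := by
    intro n
    unfold sfun
    rw [div_pow, Real.sin_sq_eq_half_sub, show 2 * ((n : ℝ) * θ) = 2 * n * θ by ring]
    ring
  have hfun : (fun n : ℕ => sfun θ n)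
      = fun n : ℕ => (1 / (n : ℝ) ^ 2 - 1 / (n : ℝ) ^ 2 * Real.cos (2 * n * θ)) / 2 :=
    funext hfe
  rw [hfun, show (π * θ - θ ^ 2) / 2 = (π ^ 2 / 6 - (θ ^ 2 - π * θ + π ^ 2 / 6)) / 2 by ring]
  exact h

theorem tendsto_trace_sq_oscillatory_B (θ : ℝ) (hθ0 : 0 ≤ θ) (hθ1 : θ ≤ π / 2)
    (B : (N : ℕ) → Matrix (Fin N) (Fin N) ℝ)
    (hB : ∀ (N : ℕ) (m n : Fin N), B N m n =
      if m = n then θ else Real.sin (((m : ℝ) - (n : ℝ)) * θ) / ((m : ℝ) - (n : ℝ))) :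
    Filter.Tendsto (fun N : ℕ => Matrix.trace (B N * B N) / (N : ℝ)) Filter.atTop
      (nhds (π * θ)) := by
  have hBE : ∀ (N : ℕ) (m n : Fin N), B N m n = Ee θ (m : ℕ) (n : ℕ) := by
    intro N m n
    rw [hB]
    unfold Ee
    rcases eq_or_ne m n with h | h
    · subst h; simp
    · rw [if_neg h, if_neg (fun hc => h (Fin.ext hc))]
  have htr : ∀ N : ℕ, Matrix.trace (B N * B N)
      = ∑ m ∈ Finset.range N, ∑ n ∈ Finset.range N, Ee θ m n * Ee θ n m := by
    intro N
    have h0 : Matrix.trace (B N * B N) = ∑ m : Fin N, ∑ n : Fin N,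
        Ee θ (m : ℕ) (n : ℕ) * Ee θ (n : ℕ) (m : ℕ) := by
      simp only [Matrix.trace, Matrix.diag, Matrix.mul_apply, hBE]
    rw [h0]
    have h1 : ∀ m : Fin N, ∑ n : Fin N, Ee θ (m : ℕ) (n : ℕ) * Ee θ (n : ℕ) (m : ℕ)
        = ∑ n ∈ Finset.range N, Ee θ (m : ℕ) n * Ee θ n (m : ℕ) := fun m =>
      Fin.sum_univ_eq_sum_range (fun n => Ee θ (m : ℕ) n * Ee θ n (m : ℕ)) N
    simp_rw [h1]
    exact Fin.sum_univ_eq_sum_range (fun m => ∑ n ∈ Finset.range N, Ee θ m n * Ee θ n m) N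
  have hs := sfun_hasSum θ hθ0 hθ1
  have h1 : HasSum (fun d : ℕ => sfun θ (d + 1)) ((π * θ - θ ^ 2) / 2) := by
    rw [hasSum_nat_add_iff 1]
    simpa [Finset.sum_range_one, show sfun θ 0 = 0 by simp [sfun]] using hs
  have hS : Tendsto (Sp θ) atTop (nhds ((π * θ - θ ^ 2) / 2)) := h1.tendsto_sum_nat
  have hC := hS.cesaro
  have hfinal : Tendsto (fun N : ℕ => θ ^ 2 + 2 * ((N : ℝ)⁻¹ * ∑ i ∈ Finset.range N, Sp θ i))
      atTop (nhds (θ ^ 2 + 2 * ((π * θ - θ ^ 2) / 2))) :=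
    tendsto_const_nhds.add (hC.const_mul 2)
  have hlim : θ ^ 2 + 2 * ((π * θ - θ ^ 2) / 2) = π * θ := by ring
  rw [hlim] at hfinal
  apply hfinal.congr'
  filter_upwards [eventually_ge_atTop 1] with N hN
  have hN0 : (N : ℝ) ≠ 0 := Nat.cast_ne_zero.2 (by omega)
  rw [htr N, main_id θ N]
  field_simp
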